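/- Let F be an infinite field and fix integers n, d, w, ℓ ≥ 1. Suppose f_1(t),…,f_N(t) ∈ F[t]^n is a finite family of n-tuples of univariate polynomials such that for every matrix polynomial A ∈ F^{w×w}[x_1,…,x_n] of individual degree at most d computed by an ROABP of width w (in any variable order), there exists i ∈ [N] for which A(x + f_i(t)) is ℓ-concentrated over F(t). Then there exists a single n-tuple g(t) ∈ F[t]^n such that for every matrix polynomial A ∈ F^{w×w}[x_1,…,x_n] of individual degree at most d computed by an ROABP of width w (in any variable order), A(x + g(t)) is ℓ-concentrated over F(t). -/

import Mathlib

open MvPolynomial Matrix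

noncomputable section

variable {F : Type*} [Field F]

/-- `p` only involves the variable `i` (it is a univariate polynomial in `x_i`). -/
def UnivariateIn {n : ℕ} (i : Fin n) (p : MvPolynomial (Fin n) F) : Prop :=
  ∀ m ∈ p.support, ∀ j : Fin n, j ≠ i → m j = 0

/-- The ordered product `D 0 * D 1 * ⋯ * D (n-1)` of the layer matrices of a branching program. -/
def layerProd {n w : ℕ} (D : Fin n → Matrix (Fin w) (Fin w) (MvPolynomial (Fin n) F)) :
    Matrix (Fin w) (Fin w) (MvPolynomial (Fin n) F) :=
  ((List.finRange n).map D).prod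

/-- The ordered product of the first `k` layer matrices. -/
def prefixProd {n w : ℕ} (k : ℕ)
    (D : Fin n → Matrix (Fin w) (Fin w) (MvPolynomial (Fin n) F)) :
    Matrix (Fin w) (Fin w) (MvPolynomial (Fin n) F) :=
  (((List.finRange n).take k).map D).prod

/-- `A` is computed by a read-once oblivious ABP of width `w` in variable order
`(x_{π 0}, …, x_{π (n-1)})`: `A = D₁ ⋯ Dₙ` where the entries of the `i`-th layer are
univariate polynomials in `x_{π i}`; the `1 × w` first layer and the `w × 1` last layer are
encoded by the constant selection vectors `u` and `v`. -/
def IsROABP {n : ℕ} (w : ℕ) (π : Equiv.Perm (Fin n)) (A : MvPolynomial (Fin n) F) : Prop :=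
  ∃ (u : Matrix (Fin 1) (Fin w) F) (D : Fin n → Matrix (Fin w) (Fin w) (MvPolynomial (Fin n) F))
    (v : Matrix (Fin w) (Fin 1) F),
    (∀ i r c, UnivariateIn (π i) (D i r c)) ∧
      A = (u.map (MvPolynomial.C (σ := Fin n)) * layerProd D * v.map (MvPolynomial.C (σ := Fin n)) :
        Matrix (Fin 1) (Fin 1) (MvPolynomial (Fin n) F)) 0 0

/-- The vector polynomial `P ∈ F[x]^{1×w}` is computed by an ROABP of width `w`
in variable order `π`. -/
def IsVecROABP {n : ℕ} (w : ℕ) (π : Equiv.Perm (Fin n))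
    (P : Fin w → MvPolynomial (Fin n) F) : Prop :=
  ∃ (u : Matrix (Fin 1) (Fin w) F) (D : Fin n → Matrix (Fin w) (Fin w) (MvPolynomial (Fin n) F)),
    (∀ i r c, UnivariateIn (π i) (D i r c)) ∧
      ∀ j, P j = (u.map (MvPolynomial.C) * layerProd D :
        Matrix (Fin 1) (Fin w) (MvPolynomial (Fin n) F)) 0 j

/-- The matrix polynomial `A ∈ F^{w×w}[x]` is computed by an ROABP of width `w`
in variable order `π`. -/
def IsMatROABP {n : ℕ} (w : ℕ) (π : Equiv.Perm (Fin n))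
    (A : Matrix (Fin w) (Fin w) (MvPolynomial (Fin n) F)) : Prop :=
  ∃ D : Fin n → Matrix (Fin w) (Fin w) (MvPolynomial (Fin n) F),
    (∀ i r c, UnivariateIn (π i) (D i r c)) ∧ A = layerProd D

/-- `A` has individual degree at most `d` in every variable. -/
def IndivDegLE {n : ℕ} (d : ℕ) (A : MvPolynomial (Fin n) F) : Prop :=
  ∀ m ∈ A.support, ∀ i, m i ≤ d

/-- The set of the first `k` variables `y_k = (x_0, …, x_{k-1})`. -/
def prefixFinset (n k : ℕ) : Finset (Fin n) := Finset.univ.filter fun i => (i : ℕ) < k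

/-- The coefficient polynomial `A_{(y,a)} ∈ F[z]`: the coefficient of the monomial `y^a`
when `A` is written as a polynomial in the variables `y` (those in `S`) with coefficients
in the remaining variables `z`. -/
def coeffWrt {n : ℕ} (S : Finset (Fin n)) (a : Fin n → ℕ) (A : MvPolynomial (Fin n) F) :
    MvPolynomial (Fin n) F :=
  ∑ m ∈ A.support.filter (fun m => ∀ i ∈ S, m i = a i),
    MvPolynomial.monomial (m.filter fun i => i ∉ S) (A.coeff m)

/-- The exponent vector supported on `S` with values given by `a`. -/
def expOn {n : ℕ} (S : Finset (Fin n)) (a : Fin n → ℕ) : Fin n →₀ ℕ :=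
  Finsupp.equivFunOnFinite.symm fun i => if i ∈ S then a i else 0

/-- A family of coefficients (of a polynomial over the `K`-vector space `V`) is
`ℓ`-concentrated over `K` if every coefficient lies in the `K`-span of the coefficients
of monomials of support `< ℓ`. -/
def Concentrated (K : Type*) [Field K] {V : Type*} [AddCommGroup V] [Module K V] {n : ℕ}
    (ℓ : ℕ) (cf : (Fin n →₀ ℕ) → V) : Prop :=
  ∀ a : Fin n →₀ ℕ, cf a ∈ Submodule.span K (cf '' {b | b.support.card < ℓ})

/-- The polynomial `A(x + f(t))`, with coefficients viewed in the rational function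
field `F(t)`. -/
def shiftBy {n : ℕ} (f : Fin n → Polynomial F) (A : MvPolynomial (Fin n) F) :
    MvPolynomial (Fin n) (RatFunc F) :=
  MvPolynomial.aeval
    (fun i => MvPolynomial.X i +
      MvPolynomial.C (algebraMap (Polynomial F) (RatFunc F) (f i))) A

/-- The polynomial `A(x + g(y,t))` for a bivariate shift `g ∈ F[y,t]^n`
(encoded with `y` the outer and `t` the inner variable), with coefficients viewed in the
rational function field `F(y,t)`. -/
def shiftBy₂ {n : ℕ} (g : Fin n → Polynomial (Polynomial F)) (A : MvPolynomial (Fin n) F) :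
    MvPolynomial (Fin n) (RatFunc (RatFunc F)) :=
  MvPolynomial.aeval
    (fun i => MvPolynomial.X i +
      MvPolynomial.C (algebraMap (Polynomial (RatFunc F)) (RatFunc (RatFunc F))
        ((g i).map (algebraMap (Polynomial F) (RatFunc F))))) A

end


section MyAux
open Polynomial

noncomputable section AuxKron

variable {F : Type*} [Field F]

lemma kron_eval_ne_zero {M : ℕ} (q : Polynomial (Polynomial F))
    (hq : q ≠ 0) (hc : ∀ k, (q.coeff k).natDegree < M) :
    q.eval ((Polynomial.X : Polynomial F) ^ M) ≠ 0 := by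
  classical
  set n0 := q.natDegree with hn0
  have hc0 : q.coeff n0 ≠ 0 := by
    simpa [hn0, Polynomial.coeff_natDegree] using Polynomial.leadingCoeff_ne_zero.mpr hq
  set d : ℕ := M * n0 + (q.coeff n0).natDegree with hd
  have key : (q.eval ((Polynomial.X : Polynomial F) ^ M)).coeff d
      = (q.coeff n0).coeff ((q.coeff n0).natDegree) := by
    rw [Polynomial.eval_eq_sum, Polynomial.sum_def, Polynomial.finset_sum_coeff]
    have hterm : ∀ k ∈ q.support, k ≠ n0 →
        (q.coeff k * ((Polynomial.X : Polynomial F) ^ M) ^ k).coeff d = 0 := by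
      intro k hk hkne
      have hkle : k ≤ n0 := Polynomial.le_natDegree_of_mem_supp k hk
      have hklt : k < n0 := lt_of_le_of_ne hkle hkne
      rw [← pow_mul, Polynomial.coeff_mul_X_pow']
      have h1 : M * k + M ≤ M * n0 := by
        calc M * k + M = M * (k + 1) := by ring
        _ ≤ M * n0 := Nat.mul_le_mul_left _ hklt
      have h2 : M * k ≤ d := by omega
      rw [if_pos h2]
      exact Polynomial.coeff_eq_zero_of_natDegree_lt (by have := hc k; omega)
    rw [Finset.sum_eq_single_of_mem n0 (Polynomial.mem_support_iff.mpr hc0) hterm]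
    rw [← pow_mul, Polynomial.coeff_mul_X_pow']
    rw [if_pos (by omega)]
    congr 1
    omega
  intro h0
  rw [h0] at key
  simp only [Polynomial.coeff_zero] at key
  exact hc0 (Polynomial.leadingCoeff_eq_zero.mp key.symm)

end AuxKron


noncomputable section AuxCD

variable {F : Type*} [Field F]

/-- all (inner) coefficients of `q : F[t][y]` have `natDegree ≤ D` -/
def CDbound (q : Polynomial (Polynomial F)) (D : ℕ) : Prop :=
  ∀ k, (q.coeff k).natDegree ≤ D

lemma CDbound.mono {q : Polynomial (Polynomial F)} {D D' : ℕ} (h : CDbound q D) (hD : D ≤ D') :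
    CDbound q D' := fun k => (h k).trans hD

lemma CDbound_mul {q r : Polynomial (Polynomial F)} {a b : ℕ}
    (hq : CDbound q a) (hr : CDbound r b) : CDbound (q * r) (a + b) := by
  intro k
  rw [Polynomial.coeff_mul]
  refine Polynomial.natDegree_sum_le_of_forall_le _ _ fun p hp => ?_
  exact (Polynomial.natDegree_mul_le).trans (add_le_add (hq p.1) (hr p.2))

lemma CDbound_prod {ι : Type*} (s : Finset ι) (G : ι → Polynomial (Polynomial F)) (D : ι → ℕ)
    (h : ∀ i ∈ s, CDbound (G i) (D i)) : CDbound (∏ i ∈ s, G i) (∑ i ∈ s, D i) := by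
  classical
  induction s using Finset.cons_induction with
  | empty => intro k; simp only [Finset.prod_empty, Finset.sum_empty]
             rcases Nat.eq_zero_or_pos k with rfl | hk
             · simp
             · simp [Polynomial.coeff_one, Nat.pos_iff_ne_zero.mp hk]
  | cons i s his ih =>
      rw [Finset.prod_cons, Finset.sum_cons]
      exact CDbound_mul (h i (Finset.mem_cons_self i s))
        (ih fun j hj => h j (Finset.mem_cons_of_mem hj))

lemma CDbound_pow {q : Polynomial (Polynomial F)} {a : ℕ} (hq : CDbound q a) (m : ℕ) :
    CDbound (q ^ m) (m * a) := by
  have := CDbound_prod (Finset.range m) (fun _ => q) (fun _ => a) (fun _ _ => hq)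
  simpa [Finset.prod_const, Finset.sum_const, Finset.card_range, mul_comm] using this

lemma CDbound_C (c : Polynomial F) : CDbound (Polynomial.C c) c.natDegree := by
  intro k
  rcases Nat.eq_zero_or_pos k with rfl | hk
  · simp
  · simp [Polynomial.coeff_C, Nat.pos_iff_ne_zero.mp hk]

lemma CDbound_algebraMap (c : F) : CDbound (algebraMap F (Polynomial (Polynomial F)) c) 0 := by
  intro k
  rw [Polynomial.algebraMap_apply]
  rcases Nat.eq_zero_or_pos k with rfl | hk
  · simp
  · simp [Polynomial.coeff_C, Nat.pos_iff_ne_zero.mp hk]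

lemma CDbound_sum {ι : Type*} (s : Finset ι) (G : ι → Polynomial (Polynomial F)) (D : ℕ)
    (h : ∀ i ∈ s, CDbound (G i) D) : CDbound (∑ i ∈ s, G i) D := by
  intro k
  rw [Polynomial.finset_sum_coeff]
  exact Polynomial.natDegree_sum_le_of_forall_le _ _ fun i hi => h i hi k

/-- coefficient degree bound for `aeval` of an `MvPolynomial` of bounded total degree -/
lemma CDbound_aeval {n : ℕ} (P : MvPolynomial (Fin n) F) {Dg T : ℕ}
    (hP : P.totalDegree ≤ Dg) (G : Fin n → Polynomial (Polynomial F))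
    (hG : ∀ j, CDbound (G j) T) :
    CDbound (MvPolynomial.aeval G P) (Dg * T) := by
  classical
  conv_lhs => rw [P.as_sum]
  rw [map_sum]
  refine CDbound_sum _ _ _ fun m hm => ?_
  rw [MvPolynomial.aeval_monomial]
  have h1 : CDbound ((m.prod fun i k => G i ^ k)) (Dg * T) := by
    rw [Finsupp.prod_fintype _ _ (fun i => pow_zero (G i))]
    have := CDbound_prod Finset.univ (fun i => G i ^ m i) (fun i => m i * T)
      (fun i _ => CDbound_pow (hG i) (m i))
    refine this.mono ?_
    rw [← Finset.sum_mul]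
    refine Nat.mul_le_mul_right _ ?_
    have : (∑ i, m i) ≤ P.totalDegree := by
      refine le_trans (le_of_eq ?_) (MvPolynomial.le_totalDegree hm)
      rw [Finsupp.sum_fintype]
      exact fun _ => rfl
    omega
  have := CDbound_mul (CDbound_algebraMap (P.coeff m)) h1
  simpa using this

end AuxCD

noncomputable section AuxDom

variable {F : Type*} [Field F]

/-- map-eval commutation helper: `(p.map C).eval (C x) = C (p.eval x)` -/
lemma map_C_eval_C (p : Polynomial F) (x : F) :
    (p.map (Polynomial.C : F →+* Polynomial F)).eval (Polynomial.C x)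
      = Polynomial.C (p.eval x) := by
  have : (Polynomial.evalRingHom (Polynomial.C x)).comp
      (Polynomial.mapRingHom (Polynomial.C : F →+* Polynomial F))
      = (Polynomial.C : F →+* Polynomial F).comp (Polynomial.evalRingHom x) := by
    apply Polynomial.ringHom_ext <;> simp
  exact RingHom.congr_fun this p

lemma map_C_eval_pow (p : Polynomial F) (M : ℕ) :
    (p.map (Polynomial.C : F →+* Polynomial F)).eval ((Polynomial.X : Polynomial F) ^ M)
      = p.comp (Polynomial.X ^ M) := by
  rw [Polynomial.eval_map]
  rfl

/-- The dominating-shift lemma: a single `g` preserving nonvanishing of all bounded-degree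
polynomial evaluations witnessed somewhere in the family. -/
lemma exists_dominating {n N : ℕ} [Infinite F] (Dg : ℕ) (f : Fin N → Fin n → Polynomial F) :
    ∃ g : Fin n → Polynomial F, ∀ P : MvPolynomial (Fin n) F, P.totalDegree ≤ Dg →
      (∃ i, (MvPolynomial.aeval (f i) P : Polynomial F) ≠ 0) →
      (MvPolynomial.aeval g P : Polynomial F) ≠ 0 := by
  classical
  rcases Nat.eq_zero_or_pos N with rfl | hN
  · exact ⟨fun _ => 0, fun P _ h => absurd h (by rintro ⟨i, -⟩; exact i.elim0)⟩
  set v : Fin N → F := fun i => (Infinite.natEmbedding F) i.val with hv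
  have hvinj : Function.Injective v := fun a b hab => by
    have := (Infinite.natEmbedding F).injective hab
    exact Fin.val_injective this
  set L : Fin N → Polynomial F := fun i => Lagrange.basis Finset.univ v i with hL
  have hLself : ∀ i, (L i).eval (v i) = 1 := fun i =>
    Lagrange.eval_basis_self (Set.injOn_of_injective hvinj) (Finset.mem_univ i)
  have hLne : ∀ i j, i ≠ j → (L i).eval (v j) = 0 := fun i j hij =>
    Lagrange.eval_basis_of_ne hij (Finset.mem_univ j)
  set T : ℕ := Finset.univ.sup (fun p : Fin N × Fin n => (f p.1 p.2).natDegree) with hT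
  set M : ℕ := Dg * T + 1 with hM
  set G : Fin n → Polynomial (Polynomial F) := fun j =>
    ∑ i, ((L i).map (Polynomial.C : F →+* Polynomial F)) * Polynomial.C (f i j) with hG
  set g : Fin n → Polynomial F := fun j =>
    ∑ i, ((L i).comp (Polynomial.X ^ M)) * (f i j) with hg
  refine ⟨g, fun P hP hex => ?_⟩
  obtain ⟨i₀, hi₀⟩ := hex
  -- evaluation of G at y := C (v i₀) gives f i₀
  have hGeval : ∀ j, (G j).eval (Polynomial.C (v i₀)) = f i₀ j := by
    intro j
    rw [hG]
    simp only [Polynomial.eval_finset_sum, Polynomial.eval_mul, Polynomial.eval_C,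
      map_C_eval_C]
    rw [Finset.sum_eq_single_of_mem i₀ (Finset.mem_univ i₀)]
    · rw [hLself i₀]; simp
    · intro b _ hb
      rw [hLne b i₀ hb]; simp
  -- the bivariate polynomial is nonzero
  have hQ : (MvPolynomial.aeval G P : Polynomial (Polynomial F)) ≠ 0 := by
    intro h0
    apply hi₀
    have hcomp : (Polynomial.evalRingHom (Polynomial.C (v i₀))).comp
        (MvPolynomial.aeval G : MvPolynomial (Fin n) F →ₐ[F] Polynomial (Polynomial F)).toRingHom
        = (MvPolynomial.aeval (f i₀) :
            MvPolynomial (Fin n) F →ₐ[F] Polynomial F).toRingHom := by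
      apply MvPolynomial.ringHom_ext
      · intro r
        simp [Polynomial.algebraMap_apply]
      · intro j
        simp [hGeval j]
    have := RingHom.congr_fun hcomp P
    simp only [RingHom.comp_apply] at this
    simp only [AlgHom.toRingHom_eq_coe, RingHom.coe_coe] at this
    rw [← this, h0]
    simp
  -- coefficient degree bounds
  have hGT : ∀ j, CDbound (G j) T := by
    intro j k
    rw [hG]
    simp only [Polynomial.finset_sum_coeff, Polynomial.coeff_mul_C, Polynomial.coeff_map]
    refine Polynomial.natDegree_sum_le_of_forall_le _ _ fun i _ => ?_
    refine (Polynomial.natDegree_C_mul_le _ _).trans ?_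
    exact Finset.le_sup (f := fun p : Fin N × Fin n => (f p.1 p.2).natDegree)
      (Finset.mem_univ (i, j))
  have hCD : CDbound (MvPolynomial.aeval G P) (Dg * T) := CDbound_aeval P hP G hGT
  -- relate aeval g with eval at X^M
  have hgeval : (MvPolynomial.aeval g P : Polynomial F)
      = (MvPolynomial.aeval G P).eval ((Polynomial.X : Polynomial F) ^ M) := by
    have hcomp : (Polynomial.evalRingHom ((Polynomial.X : Polynomial F) ^ M)).comp
        (MvPolynomial.aeval G : MvPolynomial (Fin n) F →ₐ[F] Polynomial (Polynomial F)).toRingHom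
        = (MvPolynomial.aeval g :
            MvPolynomial (Fin n) F →ₐ[F] Polynomial F).toRingHom := by
      apply MvPolynomial.ringHom_ext
      · intro r
        simp [Polynomial.algebraMap_apply]
      · intro j
        simp only [RingHom.comp_apply, MvPolynomial.aeval_X, AlgHom.toRingHom_eq_coe,
          RingHom.coe_coe, Polynomial.coe_evalRingHom]
        rw [hG, hg]
        simp only [Polynomial.eval_finset_sum, Polynomial.eval_mul, Polynomial.eval_C,
          map_C_eval_pow]
    exact (RingHom.congr_fun hcomp P).symm
  rw [hgeval]
  exact kron_eval_ne_zero _ hQ (fun k => lt_of_le_of_lt (hCD k) (by omega))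

end AuxDom


end MyAux

section MyAux2
open MvPolynomial Matrix

noncomputable section AuxLam

variable {n : ℕ}

def lamXi (n : ℕ) (a : Fin n →₀ ℕ) : MvPolynomial (Fin n) (MvPolynomial (Fin n) ℤ) :=
  ∏ j : Fin n, (X j + C (X j)) ^ a j

def lam (n : ℕ) (a b : Fin n →₀ ℕ) : MvPolynomial (Fin n) ℤ := coeff b (lamXi n a)

lemma lam_spec {K : Type*} [CommRing K] (c : Fin n → K) (a b : Fin n →₀ ℕ) :
    (∏ j : Fin n, (X j + C (c j) : MvPolynomial (Fin n) K) ^ a j).coeff b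
      = MvPolynomial.aeval c (lam n a b) := by
  have h : (∏ j : Fin n, (X j + C (c j) : MvPolynomial (Fin n) K) ^ a j)
      = MvPolynomial.map
        ((MvPolynomial.aeval c : MvPolynomial (Fin n) ℤ →ₐ[ℤ] K) :
          MvPolynomial (Fin n) ℤ →+* K) (lamXi n a) := by
    rw [lamXi, map_prod]
    refine Finset.prod_congr rfl fun j _ => ?_
    rw [map_pow, map_add, MvPolynomial.map_X, MvPolynomial.map_C]
    simp
  rw [h, MvPolynomial.coeff_map]
  rfl

lemma coeff_shift_eq {K : Type*} [CommRing K] (B : MvPolynomial (Fin n) K) (c : Fin n → K)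
    (s : Finset (Fin n →₀ ℕ)) (hs : B.support ⊆ s) (b : Fin n →₀ ℕ) :
    (MvPolynomial.aeval (fun j => X j + C (c j)) B).coeff b
      = ∑ a ∈ s, B.coeff a * MvPolynomial.eval₂ (Int.castRingHom K) c (lam n a b) := by
  classical
  rw [← Finset.sum_subset hs (fun a _ ha => by
    rw [MvPolynomial.notMem_support_iff.mp ha, zero_mul])]
  conv_lhs => rw [B.as_sum]
  rw [map_sum, MvPolynomial.coeff_sum]
  refine Finset.sum_congr rfl fun a _ => ?_
  rw [MvPolynomial.aeval_monomial, MvPolynomial.algebraMap_eq, MvPolynomial.coeff_C_mul]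
  congr 1
  rw [Finsupp.prod_fintype _ _ (fun j => pow_zero _)]
  rw [lam_spec c a b, MvPolynomial.aeval_def, algebraMap_int_eq]

def coeffTD (p : MvPolynomial (Fin n) (MvPolynomial (Fin n) ℤ)) (D : ℕ) : Prop :=
  ∀ b, (p.coeff b).totalDegree ≤ D

lemma coeffTD_mul {p q : MvPolynomial (Fin n) (MvPolynomial (Fin n) ℤ)} {a b : ℕ}
    (hp : coeffTD p a) (hq : coeffTD q b) : coeffTD (p * q) (a + b) := by
  intro b'
  rw [MvPolynomial.coeff_mul]
  refine (MvPolynomial.totalDegree_finset_sum _ _).trans ?_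
  refine Finset.sup_le fun x _ => ?_
  exact (MvPolynomial.totalDegree_mul _ _).trans (add_le_add (hp _) (hq _))

lemma coeffTD_one : coeffTD (1 : MvPolynomial (Fin n) (MvPolynomial (Fin n) ℤ)) 0 := by
  intro b
  rw [MvPolynomial.coeff_one]
  split_ifs <;> simp

lemma coeffTD_prod {ι : Type*} (s : Finset ι)
    (G : ι → MvPolynomial (Fin n) (MvPolynomial (Fin n) ℤ)) (D : ι → ℕ)
    (h : ∀ i ∈ s, coeffTD (G i) (D i)) : coeffTD (∏ i ∈ s, G i) (∑ i ∈ s, D i) := by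
  classical
  induction s using Finset.cons_induction with
  | empty => simpa using coeffTD_one
  | cons i s his ih =>
      rw [Finset.prod_cons, Finset.sum_cons]
      exact coeffTD_mul (h i (Finset.mem_cons_self i s))
        (ih fun j hj => h j (Finset.mem_cons_of_mem hj))

lemma coeffTD_pow {p : MvPolynomial (Fin n) (MvPolynomial (Fin n) ℤ)} {a : ℕ}
    (hp : coeffTD p a) (m : ℕ) : coeffTD (p ^ m) (m * a) := by
  have := coeffTD_prod (Finset.range m) (fun _ => p) (fun _ => a) (fun _ _ => hp)
  simpa [Finset.prod_const, Finset.sum_const, Finset.card_range, mul_comm] using this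

lemma coeffTD_factor (j : Fin n) :
    coeffTD ((X j + C (X j)) : MvPolynomial (Fin n) (MvPolynomial (Fin n) ℤ)) 1 := by
  intro b
  rw [MvPolynomial.coeff_add, MvPolynomial.coeff_X', MvPolynomial.coeff_C]
  split_ifs with h1 h2 h2
  · exfalso; rw [← h2] at h1; exact (one_ne_zero (α := ℕ) (Finsupp.single_eq_zero.mp h1))
  · simp
  · simp [MvPolynomial.totalDegree_X]
  · simp

lemma lam_totalDegree (a b : Fin n →₀ ℕ) : (lam n a b).totalDegree ≤ ∑ j, a j := by
  have h : coeffTD (lamXi n a) (∑ j, a j * 1) := by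
    rw [lamXi]
    exact coeffTD_prod Finset.univ _ (fun j => a j * 1) fun j _ =>
      coeffTD_pow (coeffTD_factor j) (a j)
  simpa [lam] using h b

lemma td_map_le {R S : Type*} [CommSemiring R] [CommSemiring S] (f : R →+* S)
    (p : MvPolynomial (Fin n) R) :
    ((MvPolynomial.map f p).totalDegree) ≤ p.totalDegree := by
  apply Finset.sup_le
  intro m hm
  exact MvPolynomial.le_totalDegree (MvPolynomial.support_map_subset _ _ hm)

end AuxLam


noncomputable section AuxDet

variable {K : Type*} [Field K] {w : ℕ}

lemma linearIndependent_iff_det_ne_zero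
    (fam : (Fin w × Fin w) → Matrix (Fin w) (Fin w) K) :
    LinearIndependent K fam ↔
      (Matrix.of fun p q : Fin w × Fin w => fam q p.1 p.2).det ≠ 0 := by
  classical
  set M : Matrix (Fin w × Fin w) (Fin w × Fin w) K :=
    Matrix.of fun p q => fam q p.1 p.2 with hM
  have hmv : ∀ c : (Fin w × Fin w) → K,
      (M *ᵥ c = 0) ↔ (∑ q, c q • fam q) = 0 := by
    intro c
    constructor
    · intro hc
      ext i j
      have := congrFun hc (i, j)
      simpa [Matrix.mulVec, dotProduct, hM, mul_comm, Matrix.sum_apply] using this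
    · intro hc
      funext p
      have := congrFun (congrFun hc p.1) p.2
      simpa [Matrix.mulVec, dotProduct, hM, mul_comm, Matrix.sum_apply] using this
  rw [Fintype.linearIndependent_iff]
  constructor
  · intro h hdet
    obtain ⟨c, hc0, hcv⟩ := Matrix.exists_mulVec_eq_zero_iff.mpr hdet
    exact hc0 (funext fun q => h c ((hmv c).mp hcv) q)
  · intro hdet c hc q
    by_contra hq
    have hc0 : c ≠ 0 := fun h0 => hq (by rw [h0]; rfl)
    exact hdet (Matrix.exists_mulVec_eq_zero_iff.mp ⟨c, hc0, (hmv c).mpr hc⟩)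

variable {F : Type*} [Field F] {n : ℕ}

lemma totalDegree_det_le {ι : Type*} [Fintype ι] [DecidableEq ι]
    (M : Matrix ι ι (MvPolynomial (Fin n) F)) (D : ℕ)
    (h : ∀ i j, (M i j).totalDegree ≤ D) :
    M.det.totalDegree ≤ Fintype.card ι * D := by
  rw [Matrix.det_apply']
  refine (MvPolynomial.totalDegree_finset_sum _ _).trans ?_
  refine Finset.sup_le fun σ _ => ?_
  have hε : ((Equiv.Perm.sign σ : ℤ) : MvPolynomial (Fin n) F).totalDegree = 0 := by
    rw [show ((Equiv.Perm.sign σ : ℤ) : MvPolynomial (Fin n) F)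
        = MvPolynomial.C (((Equiv.Perm.sign σ : ℤ) : F)) from
      (map_intCast (MvPolynomial.C : F →+* MvPolynomial (Fin n) F) _).symm ▸ rfl]
    exact MvPolynomial.totalDegree_C _
  refine (MvPolynomial.totalDegree_mul _ _).trans ?_
  rw [hε, zero_add]
  refine (MvPolynomial.totalDegree_finset_prod _ _).trans ?_
  calc (∑ i, (M (σ i) i).totalDegree) ≤ ∑ _i : ι, D := Finset.sum_le_sum fun i _ => h _ i
  _ = Fintype.card ι * D := by simp [Finset.sum_const, Finset.card_univ, Nat.smul_one_eq_cast]

end AuxDet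


noncomputable section AuxShift

variable {F : Type*} [Field F] {n : ℕ}

lemma shiftBy_eq (h : Fin n → Polynomial F) (P : MvPolynomial (Fin n) F) :
    shiftBy h P = MvPolynomial.aeval
      (fun j => X j + C (algebraMap (Polynomial F) (RatFunc F) (h j)))
      (MvPolynomial.map (algebraMap F (RatFunc F)) P) := by
  have hcomp :
      (MvPolynomial.aeval
        (fun i => (X i + C (algebraMap (Polynomial F) (RatFunc F) (h i)) :
          MvPolynomial (Fin n) (RatFunc F))) :
            MvPolynomial (Fin n) F →ₐ[F] MvPolynomial (Fin n) (RatFunc F))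
      = ((MvPolynomial.aeval
          (fun i => (X i + C (algebraMap (Polynomial F) (RatFunc F) (h i)) :
            MvPolynomial (Fin n) (RatFunc F))) :
              MvPolynomial (Fin n) (RatFunc F) →ₐ[RatFunc F]
                MvPolynomial (Fin n) (RatFunc F)).restrictScalars F).comp
        (MvPolynomial.mapAlgHom (Algebra.ofId F (RatFunc F))) := by
    apply MvPolynomial.algHom_ext
    intro i
    simp [MvPolynomial.mapAlgHom_apply]
  have hP := AlgHom.congr_fun hcomp P
  simpa [MvPolynomial.mapAlgHom_apply, shiftBy] using hP

/-- coefficients of the shifted polynomial in terms of the original coefficients -/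
lemma shiftBy_coeff_eq (h : Fin n → Polynomial F) (P : MvPolynomial (Fin n) F)
    (s : Finset (Fin n →₀ ℕ)) (hs : P.support ⊆ s) (b : Fin n →₀ ℕ) :
    (shiftBy h P).coeff b = ∑ a ∈ s, algebraMap F (RatFunc F) (P.coeff a)
      * MvPolynomial.eval₂ (Int.castRingHom (RatFunc F))
          (fun j => algebraMap (Polynomial F) (RatFunc F) (h j)) (lam n a b) := by
  rw [shiftBy_eq,
    coeff_shift_eq _ _ s ((MvPolynomial.support_map_subset _ _).trans hs)]
  exact Finset.sum_congr rfl fun a _ => by rw [MvPolynomial.coeff_map]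

/-- unshifting: applying the inverse shift to `shiftBy h P` recovers the base change of `P` -/
lemma unshift_shiftBy (h : Fin n → Polynomial F) (P : MvPolynomial (Fin n) F) :
    MvPolynomial.aeval
      (fun j => X j + C (- algebraMap (Polynomial F) (RatFunc F) (h j)))
      (shiftBy h P) = MvPolynomial.map (algebraMap F (RatFunc F)) P := by
  have hcomp :
      ((MvPolynomial.aeval
          (fun j => (X j + C (- algebraMap (Polynomial F) (RatFunc F) (h j)) :
            MvPolynomial (Fin n) (RatFunc F))) :
              MvPolynomial (Fin n) (RatFunc F) →ₐ[RatFunc F]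
                MvPolynomial (Fin n) (RatFunc F)).restrictScalars F).comp
        (MvPolynomial.aeval
          (fun i => (X i + C (algebraMap (Polynomial F) (RatFunc F) (h i)) :
            MvPolynomial (Fin n) (RatFunc F))) :
              MvPolynomial (Fin n) F →ₐ[F] MvPolynomial (Fin n) (RatFunc F))
      = (MvPolynomial.mapAlgHom (Algebra.ofId F (RatFunc F))) := by
    apply MvPolynomial.algHom_ext
    intro i
    simp [MvPolynomial.mapAlgHom_apply]
  have hP := AlgHom.congr_fun hcomp P
  simpa [MvPolynomial.mapAlgHom_apply, shiftBy] using hP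

/-- coefficients of the original polynomial in terms of the shifted coefficients -/
lemma shiftBy_coeff_inv (h : Fin n → Polynomial F) (P : MvPolynomial (Fin n) F)
    (s : Finset (Fin n →₀ ℕ)) (hs : (shiftBy h P).support ⊆ s)
    (a : Fin n →₀ ℕ) :
    algebraMap F (RatFunc F) (P.coeff a) = ∑ b ∈ s,
      (shiftBy h P).coeff b *
        MvPolynomial.eval₂ (Int.castRingHom (RatFunc F))
          (fun j => - algebraMap (Polynomial F) (RatFunc F) (h j)) (lam n b a) := by
  have key := coeff_shift_eq (shiftBy h P)
    (fun j => - algebraMap (Polynomial F) (RatFunc F) (h j))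
    s hs a
  rw [unshift_shiftBy, MvPolynomial.coeff_map] at key
  exact key

end AuxShift


end MyAux2

set_option synthInstance.maxHeartbeats 1000000
set_option maxHeartbeats 4000000

/-- Theorem 5.6 of the paper: from any finite family of shifts such that
every width-`w` matrix polynomial ROABP of individual degree ≤ d is `ℓ`-concentrated by some
member of the family, one can obtain a single shift `g(t)` that `ℓ`-concentrates all of them
simultaneously. -/
theorem single_shift_from_family
    {F : Type*} [Field F] [Infinite F] {n d w ℓ N : ℕ}
    (hn : 1 ≤ n) (hd : 1 ≤ d) (hw : 1 ≤ w) (hl : 1 ≤ ℓ)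
    (f : Fin N → Fin n → Polynomial F)
    (hf : ∀ A : Matrix (Fin w) (Fin w) (MvPolynomial (Fin n) F),
      (∀ r c, IndivDegLE d (A r c)) → (∃ π : Equiv.Perm (Fin n), IsMatROABP w π A) →
      ∃ i, Concentrated (RatFunc F) ℓ
        (fun a => Matrix.of fun r c => (shiftBy (f i) (A r c)).coeff a)) :
    ∃ g : Fin n → Polynomial F,
      ∀ A : Matrix (Fin w) (Fin w) (MvPolynomial (Fin n) F),
        (∀ r c, IndivDegLE d (A r c)) → (∃ π : Equiv.Perm (Fin n), IsMatROABP w π A) →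
        Concentrated (RatFunc F) ℓ
          (fun a => Matrix.of fun r c => (shiftBy g (A r c)).coeff a) := by
  classical
  obtain ⟨g, hg⟩ := exists_dominating ((w * w) * (n * d)) f
  refine ⟨g, fun A hdeg hro => ?_⟩
  obtain ⟨i, hconc⟩ := hf A hdeg hro
  set Φ : (Fin n → Polynomial F) → (MvPolynomial (Fin n) F →ₐ[F] (RatFunc F)) :=
    fun h => MvPolynomial.aeval (fun j => algebraMap (Polynomial F) (RatFunc F) (h j)) with hΦ
  set cf : (Fin n → Polynomial F) → (Fin n →₀ ℕ) → Matrix (Fin w) (Fin w) (RatFunc F) :=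
    fun h a => Matrix.of fun r c => (shiftBy h (A r c)).coeff a with hcf
  set Small : Set (Fin n →₀ ℕ) := {b | b.support.card < ℓ} with hSmall
  have hconc' : ∀ b, cf (f i) b ∈ Submodule.span (RatFunc F) (cf (f i) '' Small) := hconc
  set Su : Finset (Fin n →₀ ℕ) :=
    Finset.univ.biUnion (fun q : Fin w × Fin w => (A q.1 q.2).support) with hSu
  have hSuSub : ∀ r c, (A r c).support ⊆ Su := fun r c m hm =>
    Finset.mem_biUnion.mpr ⟨(r, c), Finset.mem_univ _, hm⟩
  set Cb : (Fin n →₀ ℕ) → Matrix (Fin w) (Fin w) (RatFunc F) :=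
    fun a => Matrix.of fun r c => algebraMap F (RatFunc F) ((A r c).coeff a) with hCb
  set V : Submodule (RatFunc F) (Matrix (Fin w) (Fin w) (RatFunc F)) := Submodule.span (RatFunc F) (Cb '' ↑Su) with hV
  -- the coefficients of any shift lie in the span of the original coefficients
  have hLshift : ∀ (h : Fin n → Polynomial F) (b : Fin n →₀ ℕ),
      cf h b = ∑ a ∈ Su, (MvPolynomial.eval₂ (Int.castRingHom (RatFunc F))
        (fun j => algebraMap (Polynomial F) (RatFunc F) (h j)) (lam n a b)) • Cb a := by
    intro h b
    ext r c
    rw [Matrix.sum_apply]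
    simp only [hcf, hCb, Matrix.of_apply, Matrix.smul_apply, smul_eq_mul]
    rw [shiftBy_coeff_eq h (A r c) Su (hSuSub r c) b]
    exact Finset.sum_congr rfl fun a _ => mul_comm _ _
  have hV1 : ∀ (h : Fin n → Polynomial F) (b), cf h b ∈ V := by
    intro h b
    rw [hLshift h b]
    exact Submodule.sum_mem _ fun a ha => Submodule.smul_mem _ _
      (Submodule.subset_span ⟨a, Finset.mem_coe.mpr ha, rfl⟩)
  -- using concentration at `f i`, the original coefficients lie in the small span at `f i`
  have hV2 : ∀ a : Fin n →₀ ℕ, Cb a ∈ Submodule.span (RatFunc F) (cf (f i) '' Small) := by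
    intro a
    set Sush : Finset (Fin n →₀ ℕ) :=
      Finset.univ.biUnion (fun q : Fin w × Fin w => (shiftBy (f i) (A q.1 q.2)).support)
      with hSush
    have hinv : Cb a = ∑ b ∈ Sush, (MvPolynomial.eval₂ (Int.castRingHom (RatFunc F))
        (fun j => - algebraMap (Polynomial F) (RatFunc F) (f i j)) (lam n b a)) • cf (f i) b := by
      ext r c
      rw [Matrix.sum_apply]
      simp only [hcf, hCb, Matrix.of_apply, Matrix.smul_apply, smul_eq_mul]
      rw [shiftBy_coeff_inv (f i) (A r c) Sush
        (fun m hm => Finset.mem_biUnion.mpr ⟨(r, c), Finset.mem_univ _, hm⟩) a]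
      exact Finset.sum_congr rfl fun b _ => mul_comm _ _
    rw [hinv]
    exact Submodule.sum_mem _ fun b _ => Submodule.smul_mem _ _ (hconc' b)
  have hVsmall : V ≤ Submodule.span (RatFunc F) (cf (f i) '' Small) := by
    rw [hV, Submodule.span_le]
    rintro x ⟨a, _, rfl⟩
    exact hV2 a
  -- extract a finite spanning set from the small image
  have hchoice : ∀ a : Fin n →₀ ℕ, ∃ T : Finset (Matrix (Fin w) (Fin w) (RatFunc F)),
      ↑T ⊆ cf (f i) '' Small ∧ (a ∈ Su → Cb a ∈ Submodule.span (RatFunc F) (T : Set _)) := by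
    intro a
    by_cases ha : a ∈ Su
    · obtain ⟨T, h1, h2⟩ := Submodule.mem_span_finite_of_mem_span
        (hVsmall (Submodule.subset_span ⟨a, Finset.mem_coe.mpr ha, rfl⟩))
      exact ⟨T, h1, fun _ => h2⟩
    · exact ⟨∅, by simp, fun h => absurd h ha⟩
  choose Tf hTf1 hTf2 using hchoice
  set T : Finset (Matrix (Fin w) (Fin w) (RatFunc F)) := Su.biUnion Tf with hT
  have hTsub : ↑T ⊆ cf (f i) '' Small := by
    intro x hx
    rw [Finset.mem_coe, Finset.mem_biUnion] at hx
    obtain ⟨a, _, hxa⟩ := hx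
    exact hTf1 a hxa
  have hspanT : Submodule.span (RatFunc F) (T : Set _) = V := by
    apply le_antisymm
    · rw [Submodule.span_le]
      intro x hx
      obtain ⟨b, _, rfl⟩ := hTsub hx
      exact hV1 (f i) b
    · rw [hV, Submodule.span_le]
      rintro x ⟨a, ha, rfl⟩
      rw [Finset.mem_coe] at ha
      exact Submodule.span_mono
        (Finset.coe_subset.mpr (Finset.subset_biUnion_of_mem Tf ha)) (hTf2 a ha)
  -- extract a linearly independent spanning subfamily
  obtain ⟨s', hs'T, hs'span, hs'ind⟩ := exists_linearIndependent (RatFunc F) (↑T : Set (Matrix (Fin w) (Fin w) (RatFunc F)))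
  have hs'fin : s'.Finite := T.finite_toSet.subset hs'T
  haveI := hs'fin.fintype
  set r := Fintype.card ↥s' with hr
  set en : ↥s' ≃ Fin r := Fintype.equivFin ↥s' with hen
  set vv : Fin r → Matrix (Fin w) (Fin w) (RatFunc F) := fun k => ((en.symm k : ↥s') : Matrix _ _ (RatFunc F))
    with hvv
  have hvvind : LinearIndependent (RatFunc F) vv := hs'ind.comp en.symm en.symm.injective
  have hvvinj : Function.Injective vv := hvvind.injective
  have hrangevv : Set.range vv = s' := by
    ext x
    constructor
    · rintro ⟨k, rfl⟩
      exact (en.symm k).2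
    · intro hx
      exact ⟨en ⟨x, hx⟩, by simp [hvv]⟩
  have hVspan : V = Submodule.span (RatFunc F) (Set.range vv) := by
    rw [hrangevv, hs'span, hspanT]
  have hfinrankV : Module.finrank (RatFunc F) V = r := by
    rw [hVspan]
    exact (finrank_span_eq_card hvvind).trans (Fintype.card_fin r)
  -- choose small exponents realizing the independent family at `f i`
  have hβex : ∀ k : Fin r, ∃ b : Fin n →₀ ℕ, b ∈ Small ∧ cf (f i) b = vv k := by
    intro k
    have hmem : vv k ∈ cf (f i) '' Small := by
      apply hTsub
      apply hs'T
      rw [← hrangevv]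
      exact ⟨k, rfl⟩
    obtain ⟨b, hb, hbe⟩ := hmem
    exact ⟨b, hb, hbe⟩
  choose β hβS hβv using hβex
  -- extend to a basis of the full matrix space using standard basis matrices
  set E' : Fin w × Fin w → Matrix (Fin w) (Fin w) (RatFunc F) := fun q =>
    Matrix.single q.1 q.2 1 with hE'
  have hE'span : Submodule.span (RatFunc F) (Set.range E') = ⊤ := by
    rw [eq_top_iff]
    intro m _
    have hmsum : m = ∑ q : Fin w × Fin w, (m q.1 q.2) • E' q := by
      rw [Fintype.sum_prod_type]
      simp only [hE', Matrix.smul_single, smul_eq_mul, mul_one]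
      exact Matrix.matrix_eq_sum_single m
    rw [hmsum]
    exact Submodule.sum_mem _ fun q _ => Submodule.smul_mem _ _
      (Submodule.subset_span ⟨q, rfl⟩)
  set tset : Set (Matrix (Fin w) (Fin w) (RatFunc F)) := s' ∪ Set.range E' with htset
  have hst : s' ⊆ tset := Set.subset_union_left
  set bset := LinearIndepOn.extend (v := id) hs'ind hst with hbset
  have hsb : s' ⊆ bset := LinearIndepOn.subset_extend (v := id) hs'ind hst
  have hbt : bset ⊆ tset := LinearIndepOn.extend_subset (v := id) hs'ind hst
  have hbind : LinearIndependent (RatFunc F) (fun x => x : ↥bset → Matrix (Fin w) (Fin w) (RatFunc F)) :=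
    LinearIndepOn.linearIndepOn_extend (v := id) hs'ind hst
  have hbspan : Submodule.span (RatFunc F) bset = ⊤ := by
    rw [LinearIndepOn.span_extend_eq_span hs'ind hst, eq_top_iff]
    exact le_trans (le_of_eq hE'span.symm) (Submodule.span_mono Set.subset_union_right)
  have hbfin : bset.Finite := ((hs'fin.union (Set.finite_range E')).subset hbt)
  haveI := hbfin.fintype
  set bbasis : Module.Basis ↥bset (RatFunc F) (Matrix (Fin w) (Fin w) (RatFunc F)) :=
    Module.Basis.mk hbind (by rw [Subtype.range_coe, hbspan]) with hbbasis
  have hcardb : Fintype.card ↥bset = w * w := by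
    have h1 := Module.finrank_eq_card_basis bbasis
    have h2 : Module.finrank (RatFunc F) (Matrix (Fin w) (Fin w) (RatFunc F)) = w * w := by
      rw [Module.finrank_matrix, Module.finrank_self, Fintype.card_fin, mul_one]
    rw [← h1, h2]
  set ζ : (Fin w × Fin w) ≃ ↥bset :=
    Fintype.equivOfCardEq (by rw [hcardb, Fintype.card_prod, Fintype.card_fin]) with hζ
  -- the entry polynomials
  set Ep : (Fin n →₀ ℕ) → (Fin w × Fin w) → MvPolynomial (Fin n) F := fun bexp q =>
    ∑ a ∈ Su, MvPolynomial.C ((A q.1 q.2).coeff a) *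
      MvPolynomial.map (Int.castRingHom F) (lam n a bexp) with hEp
  have hEpeval : ∀ (h : Fin n → Polynomial F) (bexp : Fin n →₀ ℕ) (q : Fin w × Fin w),
      (Φ h) (Ep bexp q) = cf h bexp q.1 q.2 := by
    intro h bexp q
    simp only [hEp, map_sum, _root_.map_mul]
    simp only [hcf, Matrix.of_apply]
    rw [shiftBy_coeff_eq h (A q.1 q.2) Su (hSuSub q.1 q.2) bexp]
    refine Finset.sum_congr rfl fun a _ => ?_
    congr 1
    · simp [hΦ]
    · rw [hΦ]
      simp only
      rw [MvPolynomial.aeval_def, MvPolynomial.eval₂_map]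
      congr 1
      exact RingHom.ext fun z => by simp
  have hEpdeg : ∀ bexp q, (Ep bexp q).totalDegree ≤ n * d := by
    intro bexp q
    refine (MvPolynomial.totalDegree_finset_sum _ _).trans (Finset.sup_le fun a ha => ?_)
    refine (MvPolynomial.totalDegree_mul _ _).trans ?_
    rw [MvPolynomial.totalDegree_C, zero_add]
    refine le_trans (td_map_le _ _) ?_
    refine (lam_totalDegree a bexp).trans ?_
    obtain ⟨q', _, hq'⟩ := Finset.mem_biUnion.mp ha
    have had : ∀ j, a j ≤ d := fun j => hdeg q'.1 q'.2 a hq' j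
    calc (∑ j, a j) ≤ Finset.univ.card • d :=
          Finset.sum_le_card_nsmul _ _ _ (fun j _ => had j)
    _ = n * d := by simp [Finset.card_univ, smul_eq_mul]
  -- the column polynomials
  have hcolex : ∀ x : ↥bset, ∃ col : (Fin w × Fin w) → MvPolynomial (Fin n) F,
      (∀ q, (col q).totalDegree ≤ n * d) ∧
      ((x : Matrix (Fin w) (Fin w) (RatFunc F)) ∈ s' →
        ∃ k : Fin r, vv k = (x : Matrix (Fin w) (Fin w) (RatFunc F)) ∧
          ∀ (h : Fin n → Polynomial F) q, (Φ h) (col q) = cf h (β k) q.1 q.2) ∧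
      ((x : Matrix (Fin w) (Fin w) (RatFunc F)) ∉ s' →
        ∀ (h : Fin n → Polynomial F) q, (Φ h) (col q)
          = (x : Matrix (Fin w) (Fin w) (RatFunc F)) q.1 q.2) := by
    intro x
    by_cases hx : (x : Matrix (Fin w) (Fin w) (RatFunc F)) ∈ s'
    · refine ⟨Ep (β (en ⟨_, hx⟩)), fun q => hEpdeg _ _, fun _ => ⟨en ⟨_, hx⟩, ?_, ?_⟩,
        fun hc => absurd hx hc⟩
      · rw [hvv]; simp
      · intro h q; exact hEpeval h _ q
    · have hx2 : (x : Matrix (Fin w) (Fin w) (RatFunc F)) ∈ Set.range E' := by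
        rcases hbt x.2 with h | h
        · exact absurd h hx
        · exact h
      obtain ⟨q₀, hq₀⟩ := hx2
      refine ⟨fun q => if q = q₀ then 1 else 0, fun q => ?_, fun hc => absurd hc hx,
        fun _ h q => ?_⟩
      · by_cases hq : q = q₀ <;> simp [hq]
      · by_cases hqq : q = q₀
        · rw [← hq₀, hE']
          show (Φ h) (if q = q₀ then 1 else 0) = _
          rw [if_pos hqq, _root_.map_one, hqq]
          exact (Matrix.single_apply_same _ _ _).symm
        · rw [← hq₀, hE']
          show (Φ h) (if q = q₀ then 1 else 0) = _
          rw [if_neg hqq, map_zero]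
          refine (Matrix.single_apply_of_ne _ _ _ _ _ ?_).symm
          intro hcon
          exact hqq (Prod.ext hcon.1.symm hcon.2.symm)
  choose colp hcolTD hcolS hcolE using hcolex
  -- the certificate polynomial
  set Dmat : Matrix (Fin w × Fin w) (Fin w × Fin w) (MvPolynomial (Fin n) F) :=
    Matrix.of fun p q => colp (ζ q) p with hDmat
  set Dpoly := Dmat.det with hDpoly
  have hDdeg : Dpoly.totalDegree ≤ (w * w) * (n * d) := by
    have := totalDegree_det_le Dmat (n * d) (fun p q => hcolTD (ζ q) p)
    rwa [Fintype.card_prod, Fintype.card_fin] at this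
  have hmapdet : ∀ h : Fin n → Polynomial F,
      (Φ h) Dpoly = (Dmat.map (Φ h)).det := fun h =>
    RingHom.map_det (Φ h).toRingHom Dmat
  -- the matrix at a shift h, when all columns are resolved for x ∈ bset:
  have hcolval_fi : ∀ x : ↥bset, ∀ q : Fin w × Fin w,
      (Φ (f i)) (colp x q) = (x : Matrix (Fin w) (Fin w) (RatFunc F)) q.1 q.2 := by
    intro x q
    by_cases hx : (x : Matrix (Fin w) (Fin w) (RatFunc F)) ∈ s'
    · obtain ⟨k, hk, hcol⟩ := hcolS x hx
      rw [hcol (f i) q, hβv k, hk]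
    · exact hcolE x hx (f i) q
  have hdetfi : (Dmat.map (Φ (f i))).det ≠ 0 := by
    have hMeq : Dmat.map (Φ (f i)) =
        Matrix.of fun p q : Fin w × Fin w => ((ζ q : Matrix (Fin w) (Fin w) (RatFunc F))) p.1 p.2 := by
      ext p q
      simp only [Matrix.map_apply, Matrix.of_apply, hDmat]
      exact hcolval_fi (ζ q) p
    rw [hMeq, ← linearIndependent_iff_det_ne_zero]
    exact hbind.comp ζ ζ.injective
  -- transfer nonvanishing through the dominating shift
  have hΦeq : ∀ (h : Fin n → Polynomial F) (P : MvPolynomial (Fin n) F),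
      (Φ h) P = algebraMap (Polynomial F) (RatFunc F) (MvPolynomial.aeval h P) := by
    intro h P
    have hcmp : (Φ h) = ((IsScalarTower.toAlgHom F (Polynomial F) (RatFunc F)).comp
        (MvPolynomial.aeval h : MvPolynomial (Fin n) F →ₐ[F] Polynomial F)) := by
      apply MvPolynomial.algHom_ext
      intro j
      simp [hΦ]
    rw [hcmp]
    rfl
  have hfi_ne : MvPolynomial.aeval (f i) Dpoly ≠ (0 : Polynomial F) := by
    intro h0
    apply hdetfi
    rw [← hmapdet, hΦeq, h0, map_zero]
  have hg_ne : MvPolynomial.aeval g Dpoly ≠ (0 : Polynomial F) :=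
    hg Dpoly hDdeg ⟨i, hfi_ne⟩
  have hdetg : (Dmat.map (Φ g)).det ≠ 0 := by
    rw [← hmapdet, hΦeq]
    intro h0
    exact hg_ne (RatFunc.algebraMap_injective F (by rw [h0, map_zero]))
  -- columns at g are independent
  set Ug : (Fin w × Fin w) → Matrix (Fin w) (Fin w) (RatFunc F) := fun q =>
    Matrix.of fun r' c' => (Φ g) (colp (ζ q) (r', c')) with hUg
  have hUgind : LinearIndependent (RatFunc F) Ug := by
    rw [linearIndependent_iff_det_ne_zero]
    have : (Matrix.of fun p q : Fin w × Fin w => Ug q p.1 p.2) = Dmat.map (Φ g) := by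
      ext p q
      simp only [Matrix.of_apply, Matrix.map_apply, hUg, hDmat]
    rw [this]
    exact hdetg
  -- the small shifted coefficients at g span V
  set ww : Fin r → Matrix (Fin w) (Fin w) (RatFunc F) := fun k => cf g (β k) with hww
  have hιmem : ∀ k : Fin r, vv k ∈ bset := by
    intro k
    apply hsb
    rw [← hrangevv]
    exact ⟨k, rfl⟩
  set ι : Fin r → ↥bset := fun k => ⟨vv k, hιmem k⟩ with hι
  have hιinj : Function.Injective ι := by
    intro a b hab
    simp only [hι] at hab
    exact hvvinj (Subtype.mk_eq_mk.mp hab)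
  have hwUg : ∀ k, ww k = Ug (ζ.symm (ι k)) := by
    intro k
    have hxval : ((ζ (ζ.symm (ι k)) : ↥bset) : Matrix (Fin w) (Fin w) (RatFunc F)) = vv k := by
      rw [Equiv.apply_symm_apply]
    have hxs' : ((ζ (ζ.symm (ι k)) : ↥bset) : Matrix (Fin w) (Fin w) (RatFunc F)) ∈ s' := by
      rw [hxval, ← hrangevv]; exact ⟨k, rfl⟩
    obtain ⟨k', hk', hcol⟩ := hcolS _ hxs'
    have hkk : k' = k := hvvinj (by rw [hk', hxval])
    subst hkk
    ext r' c'
    simp only [hww, hUg, Matrix.of_apply]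
    exact (hcol g (r', c')).symm
  have hwwind : LinearIndependent (RatFunc F) ww := by
    have : ww = Ug ∘ (fun k => ζ.symm (ι k)) := funext hwUg
    rw [this]
    exact hUgind.comp _ (ζ.symm.injective.comp hιinj)
  set W : Submodule (RatFunc F) (Matrix (Fin w) (Fin w) (RatFunc F)) := Submodule.span (RatFunc F) (Set.range ww) with hW
  have hWV : W ≤ V := by
    rw [hW, Submodule.span_le]
    rintro x ⟨k, rfl⟩
    exact hV1 g (β k)
  have hfrW : Module.finrank (RatFunc F) W = r := by
    rw [hW]
    exact (finrank_span_eq_card hwwind).trans (Fintype.card_fin r)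
  have hVW : W = V := Submodule.eq_of_le_of_finrank_le hWV (by rw [hfrW, hfinrankV])
  -- conclude concentration at g
  intro a
  show cf g a ∈ Submodule.span (RatFunc F) (cf g '' Small)
  have h1 : cf g a ∈ W := by
    rw [hVW]
    exact hV1 g a
  have h2 : W ≤ Submodule.span (RatFunc F) (cf g '' Small) := by
    rw [hW, Submodule.span_le]
    rintro x ⟨k, rfl⟩
    exact Submodule.subset_span ⟨β k, hβS k, rfl⟩
  exact h2 h1
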